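/- An infinite group whose cardinality has countable cofinality is not strongly bounded. -/

import Mathlib

open Pointwise

/-- A group is strongly bounded if every action by isometries on a metric space
has bounded orbits. -/
def StronglyBounded (G : Type*) [Group G] : Prop :=
  ∀ (X : Type) [MetricSpace X] [MulAction G X],
    (∀ g : G, Isometry fun x : X => g • x) →
    ∀ x : X, Bornology.IsBounded (MulAction.orbit G x)

/-- Γ(Z) = Z ∪ {1} ∪ Z⁻¹ ∪ Z·Z. -/
def GammaSet {G : Type*} [Group G] (Z : Set G) : Set G :=
  Z ∪ {1} ∪ Z⁻¹ ∪ Z * Z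

lemma subset_gammaSet {G : Type*} [Group G] (W : Set G) : W ⊆ GammaSet W := by
  intro g hg
  exact Or.inl (Or.inl (Or.inl hg))

lemma one_mem_gammaSet {G : Type*} [Group G] (W : Set G) : (1 : G) ∈ GammaSet W :=
  Or.inl (Or.inl (Or.inr rfl))

lemma mul_subset_gammaSet {G : Type*} [Group G] (W : Set G) : W * W ⊆ GammaSet W :=
  fun _ h => Or.inr h

lemma inv_mem_gammaSet {G : Type*} [Group G] {W : Set G}
    (hW : ∀ g : G, g ∈ W → g⁻¹ ∈ W) {g : G} (hg : g ∈ GammaSet W) : g⁻¹ ∈ GammaSet W := by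
  rcases hg with ((h | h) | h) | h
  · exact Or.inl (Or.inr (Set.inv_mem_inv.2 h))
  · rcases h with rfl; exact Or.inl (Or.inl (Or.inr (by simp)))
  · exact Or.inl (Or.inl (Or.inl (Set.mem_inv.1 h)))
  · rcases h with ⟨a, ha, b, hb, rfl⟩
    exact Or.inr ⟨b⁻¹, hW _ hb, a⁻¹, hW _ ha, (mul_inv_rev a b).symm⟩

lemma card_inv_le {G : Type*} [Group G] (W : Set G) :
    Cardinal.mk (W⁻¹ : Set G) ≤ Cardinal.mk W := by
  have : (W⁻¹ : Set G) = (fun g : G => g⁻¹) ⁻¹' W := rfl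
  rw [this]
  exact Cardinal.mk_preimage_of_injective _ _ inv_injective

lemma card_gammaSet_lt {G : Type*} [Group G] {W : Set G} {κ : Cardinal}
    (hκ : Cardinal.aleph0 ≤ κ) (hW : Cardinal.mk W < κ) :
    Cardinal.mk (GammaSet W : Set G) < κ := by
  have h1 : Cardinal.mk ({1} : Set G) < κ := by
    rw [Cardinal.mk_singleton]
    exact lt_of_lt_of_le Cardinal.one_lt_aleph0 hκ
  have hinv : Cardinal.mk (W⁻¹ : Set G) < κ := lt_of_le_of_lt (card_inv_le W) hW
  have hmul : Cardinal.mk (W * W : Set G) < κ := by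
    have : Cardinal.mk (W * W : Set G) ≤ Cardinal.mk W * Cardinal.mk W := by
      have : (W * W : Set G) = Set.image2 (· * ·) W W := rfl
      rw [this]
      exact Cardinal.mk_image2_le
    exact lt_of_le_of_lt this (Cardinal.mul_lt_of_lt hκ hW hW)
  calc Cardinal.mk (GammaSet W : Set G)
      ≤ Cardinal.mk ((W ∪ {1} ∪ W⁻¹ : Set G)) + Cardinal.mk (W * W : Set G) :=
        Cardinal.mk_union_le _ _
    _ < κ := by
        apply Cardinal.add_lt_of_lt hκ _ hmul
        calc Cardinal.mk ((W ∪ {1} ∪ W⁻¹ : Set G))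
            ≤ Cardinal.mk ((W ∪ {1} : Set G)) + Cardinal.mk (W⁻¹ : Set G) :=
              Cardinal.mk_union_le _ _
          _ < κ := Cardinal.add_lt_of_lt hκ
              (lt_of_le_of_lt (Cardinal.mk_union_le _ _) (Cardinal.add_lt_of_lt hκ hW h1)) hinv

/-- From a suitable filtration the group is not strongly bounded. -/
lemma not_stronglyBounded_of_filtration (G : Type) [Group G] (Z : ℕ → Set G)
    (hzero : Z 0 = {1})
    (hmono : Monotone Z)
    (hinv : ∀ n, ∀ g : G, g ∈ Z n → g⁻¹ ∈ Z n)
    (hmul : ∀ n, Z n * Z n ⊆ Z (n + 1))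
    (hcover : ∀ g : G, ∃ n, g ∈ Z n)
    (hproper : ∀ n, ∃ g : G, g ∉ Z n) : ¬ StronglyBounded G := by
  classical
  set ℓ : G → ℕ := fun g => Nat.find (hcover g) with hℓdef
  have hmem : ∀ g : G, g ∈ Z (ℓ g) := fun g => Nat.find_spec (hcover g)
  have hle : ∀ {g : G} {n : ℕ}, g ∈ Z n → ℓ g ≤ n := fun h => Nat.find_le h
  have hone : ℓ 1 = 0 := Nat.le_zero.1 (hle (by rw [hzero]; rfl))
  have heqone : ∀ {g : G}, ℓ g = 0 → g = 1 := by
    intro g hg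
    have := hmem g
    rw [hg, hzero] at this
    exact this
  have hlinv : ∀ g : G, ℓ g⁻¹ = ℓ g := by
    have key : ∀ g : G, ℓ g⁻¹ ≤ ℓ g := fun g => hle (hinv _ _ (hmem g))
    intro g
    refine le_antisymm (key g) ?_
    have := key g⁻¹
    rwa [inv_inv] at this
  have htri : ∀ a b : G, ℓ (a * b) ≤ ℓ a + ℓ b := by
    intro a b
    rcases Nat.eq_zero_or_pos (ℓ a) with ha | ha
    · rw [heqone ha]; simp [hone]
    rcases Nat.eq_zero_or_pos (ℓ b) with hb | hb
    · rw [heqone hb]; simp [hone]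
    have hab : a * b ∈ Z (max (ℓ a) (ℓ b) + 1) :=
      hmul _ ⟨a, hmono (le_max_left _ _) (hmem a), b, hmono (le_max_right _ _) (hmem b), rfl⟩
    have : max (ℓ a) (ℓ b) + 1 ≤ ℓ a + ℓ b := by omega
    exact le_trans (hle hab) this
  intro SB
  letI : MetricSpace G :=
    { dist := fun g h => (ℓ (g⁻¹ * h) : ℝ)
      dist_self := fun g => by simp [inv_mul_cancel, hone]
      dist_comm := fun g h => by
        have : h⁻¹ * g = (g⁻¹ * h)⁻¹ := by group
        simp only [this, hlinv]
      dist_triangle := fun x y z => by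
        show (ℓ (x⁻¹ * z) : ℝ) ≤ (ℓ (x⁻¹ * y) : ℝ) + (ℓ (y⁻¹ * z) : ℝ)
        have h : x⁻¹ * z = (x⁻¹ * y) * (y⁻¹ * z) := by group
        rw [h]
        exact_mod_cast htri (x⁻¹ * y) (y⁻¹ * z)
      eq_of_dist_eq_zero := fun {x y} h => by
        have h' : (ℓ (x⁻¹ * y) : ℝ) = 0 := h
        have : ℓ (x⁻¹ * y) = 0 := by exact_mod_cast h'
        have := heqone this
        exact (inv_mul_eq_one.1 this) }
  have hiso : ∀ g : G, Isometry fun x : G => g • x := by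
    intro g
    apply Isometry.of_dist_eq
    intro x y
    show (ℓ ((g * x)⁻¹ * (g * y)) : ℝ) = (ℓ (x⁻¹ * y) : ℝ)
    congr 2
    group
  have hbdd := SB G hiso (1 : G)
  rw [Metric.isBounded_iff] at hbdd
  obtain ⟨C, hC⟩ := hbdd
  obtain ⟨g, hg⟩ := hproper ⌈C⌉₊
  have h1 : (1 : G) ∈ MulAction.orbit G (1 : G) := MulAction.mem_orbit_self _
  have hg' : g ∈ MulAction.orbit G (1 : G) := ⟨g, by simp⟩
  have hdist := hC h1 hg'
  have hdg : dist (1 : G) g = (ℓ g : ℝ) := by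
    show (ℓ ((1 : G)⁻¹ * g) : ℝ) = _
    rw [inv_one, one_mul]
  rw [hdg] at hdist
  have hlg : ⌈C⌉₊ < ℓ g := by
    by_contra h
    push_neg at h
    exact hg (hmono h (hmem g))
  have : (ℓ g : ℝ) ≤ (⌈C⌉₊ : ℝ) := le_trans hdist (Nat.le_ceil C)
  have : ℓ g ≤ ⌈C⌉₊ := by exact_mod_cast this
  omega

theorem countable_cofinality_not_stronglyBounded (G : Type) [Group G] [Infinite G]
    (hcof : (Cardinal.mk G).ord.cof = Cardinal.aleph0) : ¬ StronglyBounded G := by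
  classical
  have hinf : Cardinal.aleph0 ≤ Cardinal.mk G := Cardinal.infinite_iff.1 ‹Infinite G›
  -- a cofinal sequence of ordinals below (#G).ord
  obtain ⟨ι, f, hlsub, hι⟩ := Ordinal.exists_lsub_cof (Cardinal.mk G).ord
  rw [hcof] at hι
  have jne : Nonempty (ℕ ≃ ι) := Cardinal.eq.1 (by rw [hι, Cardinal.mk_nat])
  obtain ⟨j⟩ := jne
  -- a well-order of G of type (#G).ord
  have ene : Nonempty (G ≃ (Cardinal.mk G).ord.ToType) :=
    Cardinal.eq.1 (by rw [Cardinal.mk_toType, Cardinal.card_ord])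
  obtain ⟨e⟩ := ene
  have hflt : ∀ i : ι, f i < (Cardinal.mk G).ord := fun i => hlsub ▸ Ordinal.lt_lsub f i
  set em := (Ordinal.ToType.mk (o := (Cardinal.mk G).ord)) with hemdef
  set x : ℕ → (Cardinal.mk G).ord.ToType := fun n => em ⟨f (j n), hflt (j n)⟩ with hxdef
  set S : ℕ → Set G := fun n => e ⁻¹' (Set.Iic (x n)) with hSdef
  have hScard : ∀ n, Cardinal.mk (S n) < Cardinal.mk G := by
    intro n
    have h1 : Cardinal.mk (S n) ≤ Cardinal.mk (Set.Iic (x n)) :=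
      Cardinal.mk_preimage_of_injective _ _ e.injective
    have h2 : Cardinal.mk (Set.Iic (x n)) < Cardinal.mk G := by
      rw [← Set.Iio_union_right]
      refine lt_of_le_of_lt (Cardinal.mk_union_le _ _) ?_
      refine Cardinal.add_lt_of_lt hinf (Cardinal.mk_Iio_ord_toType _) ?_
      rw [Cardinal.mk_singleton]
      exact lt_of_lt_of_le Cardinal.one_lt_aleph0 hinf
    exact lt_of_le_of_lt h1 h2
  have hScover : ∀ g : G, ∃ n, g ∈ S n := by
    intro g
    have hg : ((em.symm (e g) : Set.Iio (Cardinal.mk G).ord) : Ordinal) < Ordinal.lsub f := by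
      rw [hlsub]; exact (em.symm (e g)).2
    obtain ⟨i, hi⟩ := Ordinal.lt_lsub_iff.1 hg
    refine ⟨j.symm i, ?_⟩
    show e g ≤ x (j.symm i)
    have h1 : em.symm (e g) ≤ ⟨f i, hflt i⟩ := Subtype.coe_le_coe.1 hi
    have h2 : e g ≤ em ⟨f i, hflt i⟩ := by
      calc e g = em (em.symm (e g)) := (em.apply_symm_apply _).symm
        _ ≤ em ⟨f i, hflt i⟩ := em.le_iff_le.2 h1
    have h3 : x (j.symm i) = em ⟨f i, hflt i⟩ := by
      rw [hxdef]
      simp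
    rw [h3]
    exact h2
  -- the filtration
  set Z : ℕ → Set G := fun n =>
    Nat.rec ({1} : Set G) (fun n Zn => GammaSet (Zn ∪ S n ∪ (S n)⁻¹)) n with hZdef
  have hZsucc : ∀ n, Z (n + 1) = GammaSet (Z n ∪ S n ∪ (S n)⁻¹) := fun n => rfl
  have hZsub : ∀ n, Z n ⊆ Z (n + 1) := by
    intro n g hg
    rw [hZsucc]
    exact subset_gammaSet _ (Or.inl (Or.inl hg))
  have hmono : Monotone Z := monotone_nat_of_le_succ hZsub
  have hinv : ∀ n, ∀ g : G, g ∈ Z n → g⁻¹ ∈ Z n := by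
    intro n
    induction n with
    | zero =>
      intro g hg
      have hg' : g ∈ ({1} : Set G) := hg
      rcases hg' with rfl
      show (1 : G)⁻¹ ∈ ({1} : Set G)
      simp
    | succ n ih =>
      intro g hg
      rw [hZsucc] at hg ⊢
      refine inv_mem_gammaSet ?_ hg
      intro h hh
      rcases hh with (hh | hh) | hh
      · exact Or.inl (Or.inl (ih h hh))
      · exact Or.inr (Set.inv_mem_inv.2 hh)
      · exact Or.inl (Or.inr (by simpa using hh))
  have hmul : ∀ n, Z n * Z n ⊆ Z (n + 1) := by
    intro n
    rw [hZsucc]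
    refine subset_trans ?_ (mul_subset_gammaSet _)
    exact Set.mul_subset_mul (fun g hg => Or.inl (Or.inl hg)) (fun g hg => Or.inl (Or.inl hg))
  have hcover : ∀ g : G, ∃ n, g ∈ Z n := by
    intro g
    obtain ⟨n, hn⟩ := hScover g
    exact ⟨n + 1, (hZsucc n) ▸ subset_gammaSet _ (Or.inl (Or.inr hn))⟩
  have hZcard : ∀ n, Cardinal.mk (Z n) < Cardinal.mk G := by
    intro n
    induction n with
    | zero =>
      show Cardinal.mk ({1} : Set G) < _
      rw [Cardinal.mk_singleton]
      exact lt_of_lt_of_le Cardinal.one_lt_aleph0 hinf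
    | succ n ih =>
      rw [hZsucc]
      refine card_gammaSet_lt hinf ?_
      refine lt_of_le_of_lt (Cardinal.mk_union_le _ _) (Cardinal.add_lt_of_lt hinf ?_ ?_)
      · exact lt_of_le_of_lt (Cardinal.mk_union_le _ _)
          (Cardinal.add_lt_of_lt hinf ih (hScard n))
      · exact lt_of_le_of_lt (card_inv_le _) (hScard n)
  have hproper : ∀ n, ∃ g : G, g ∉ Z n := by
    intro n
    by_contra h
    push_neg at h
    have huniv : Z n = Set.univ := Set.eq_univ_of_forall h
    have hc := hZcard n
    rw [huniv, Cardinal.mk_univ] at hc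
    exact lt_irrefl _ hc
  exact not_stronglyBounded_of_filtration G Z rfl hmono hinv hmul hcover hproper
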